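/- The function x ↦ M_0(x²/2) has a unique positive root γ; moreover M_0(x²/2) > 0 for x ∈ (0, γ) and M_0(x²/2) < 0 for x > γ. -/

import Mathlib

open Real

noncomputable def erfi (x : ℝ) : ℝ := (2 / Real.sqrt π) * ∫ z in (0:ℝ)..x, Real.exp (z ^ 2)

noncomputable def M0 (u : ℝ) : ℝ := Real.exp u - Real.sqrt (π * u) * erfi (Real.sqrt u)

noncomputable def Faux (t : ℝ) : ℝ := ∫ z in (0:ℝ)..t, Real.exp (z ^ 2)

noncomputable def faux (t : ℝ) : ℝ := Real.exp (t ^ 2) - 2 * t * Faux t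

lemma hcont : Continuous fun z : ℝ => Real.exp (z ^ 2) := by continuity

lemma Faux_hasDeriv (t : ℝ) : HasDerivAt Faux (Real.exp (t ^ 2)) t :=
  intervalIntegral.integral_hasDerivAt_right
    (hcont.intervalIntegrable _ _) (hcont.stronglyMeasurableAtFilter _ _) hcont.continuousAt

lemma Faux_pos {t : ℝ} (ht : 0 < t) : 0 < Faux t :=
  intervalIntegral.intervalIntegral_pos_of_pos_on (hcont.intervalIntegrable _ _)
    (fun x _ => Real.exp_pos _) ht

lemma faux_hasDeriv (t : ℝ) : HasDerivAt faux (-(2 * Faux t)) t := by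
  have h1 : HasDerivAt (fun t : ℝ => Real.exp (t ^ 2)) (Real.exp (t ^ 2) * (2 * t)) t := by
    have := ((hasDerivAt_pow 2 t).exp)
    simpa [mul_comm] using this
  have h2 : HasDerivAt (fun t : ℝ => 2 * t) 2 t := by
    simpa using (hasDerivAt_id t).const_mul 2
  have h3 : HasDerivAt (fun t : ℝ => 2 * t * Faux t)
      (2 * Faux t + (2 * t) * Real.exp (t ^ 2)) t := by
    exact h2.mul (Faux_hasDeriv t)
  have := h1.sub h3
  rw [show -(2 * Faux t) = Real.exp (t ^ 2) * (2 * t) - (2 * Faux t + 2 * t * Real.exp (t ^ 2)) by ring]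
  exact this

lemma faux_cont : Continuous faux := by
  have : Differentiable ℝ faux := fun t => (faux_hasDeriv t).differentiableAt
  exact this.continuous

lemma faux_anti : StrictAntiOn faux (Set.Ici (0 : ℝ)) := by
  apply strictAntiOn_of_deriv_neg (convex_Ici 0) faux_cont.continuousOn
  intro t ht
  rw [interior_Ici] at ht
  rw [(faux_hasDeriv t).deriv]
  simpa using Faux_pos ht

lemma faux_zero : faux 0 = 1 := by
  simp [faux, Faux]

lemma faux_le {t : ℝ} (ht : 0 ≤ t) : faux t ≤ 1 - t ^ 2 := by
  rcases eq_or_lt_of_le ht with h | h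
  · simp [← h, faux_zero]
  -- t * Faux t ≥ (exp (t^2) - 1)/2 + t^2/2
  have key : (Real.exp (t ^ 2) - 1) / 2 + t ^ 2 / 2 ≤ t * Faux t := by
    have h1 : ∫ z in (0:ℝ)..t, z * Real.exp (z ^ 2) = (Real.exp (t ^ 2) - 1) / 2 := by
      have hG : ∀ z : ℝ, HasDerivAt (fun z : ℝ => Real.exp (z ^ 2) / 2)
          (z * Real.exp (z ^ 2)) z := by
        intro z
        have := ((hasDerivAt_pow 2 z).exp).div_const 2
        rw [show z * Real.exp (z ^ 2) = Real.exp (z ^ 2) * (((2:ℕ):ℝ) * z ^ (2 - 1)) / 2 by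
          rw [show (2:ℕ) - 1 = 1 from rfl]; push_cast; ring]
        exact this
      rw [intervalIntegral.integral_eq_sub_of_hasDerivAt (fun z _ => hG z)
        (Continuous.intervalIntegrable (by continuity) _ _)]
      norm_num
      ring
    have h2 : ∫ z in (0:ℝ)..t, (t - z) = t ^ 2 / 2 := by
      rw [intervalIntegral.integral_sub (intervalIntegrable_const)
        (Continuous.intervalIntegrable (by continuity : Continuous fun z : ℝ => z) _ _)]
      simp [integral_id]
      ring
    have h3 : ∫ z in (0:ℝ)..t, (z * Real.exp (z ^ 2) + (t - z)) =
        (Real.exp (t ^ 2) - 1) / 2 + t ^ 2 / 2 := by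
      rw [intervalIntegral.integral_add (Continuous.intervalIntegrable (by continuity) _ _)
        (Continuous.intervalIntegrable (by continuity) _ _), h1, h2]
    have h4 : t * Faux t = ∫ z in (0:ℝ)..t, t * Real.exp (z ^ 2) := by
      rw [Faux, ← intervalIntegral.integral_const_mul]
    rw [h4, ← h3]
    apply intervalIntegral.integral_mono_on h.le
      (Continuous.intervalIntegrable (by continuity) _ _)
      (Continuous.intervalIntegrable (by continuity) _ _)
    intro z hz
    obtain ⟨hz0, hzt⟩ := hz
    have he : 1 ≤ Real.exp (z ^ 2) := Real.one_le_exp (by positivity)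
    nlinarith [Real.exp_pos (z ^ 2)]
  have := key
  simp only [faux]
  nlinarith
lemma M0_eq {x : ℝ} (hx : 0 ≤ x) : M0 (x ^ 2 / 2) = faux (x / Real.sqrt 2) := by
  have h2 : (0:ℝ) < Real.sqrt 2 := Real.sqrt_pos.mpr (by norm_num)
  set t := x / Real.sqrt 2 with ht
  have htnn : 0 ≤ t := div_nonneg hx h2.le
  have ht2 : t ^ 2 = x ^ 2 / 2 := by
    rw [ht, div_pow, Real.sq_sqrt (by norm_num : (0:ℝ) ≤ 2)]
  rw [M0, faux, ← ht2, Real.sqrt_sq htnn, erfi]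
  have : Real.sqrt (π * t ^ 2) = Real.sqrt π * t := by
    rw [Real.sqrt_mul Real.pi_pos.le, Real.sqrt_sq htnn]
  rw [this]
  have : Real.sqrt π * t * (2 / Real.sqrt π * ∫ z in (0:ℝ)..t, Real.exp (z ^ 2))
      = 2 * t * Faux t := by
    rw [Faux]; field_simp
  rw [this]

theorem M0_unique_positive_root :
    ∃ γ : ℝ, 0 < γ ∧ M0 (γ ^ 2 / 2) = 0 ∧
      (∀ x : ℝ, 0 < x → M0 (x ^ 2 / 2) = 0 → x = γ) ∧
      (∀ x : ℝ, 0 < x → x < γ → 0 < M0 (x ^ 2 / 2)) ∧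
      (∀ x : ℝ, γ < x → M0 (x ^ 2 / 2) < 0) := by
  have h2 : (0:ℝ) < Real.sqrt 2 := Real.sqrt_pos.mpr (by norm_num)
  -- find root c of faux in (0, 2)
  have hf2 : faux 2 ≤ -3 := by
    have := faux_le (by norm_num : (0:ℝ) ≤ 2)
    nlinarith
  have hmem : (0:ℝ) ∈ Set.Icc (faux 2) (faux 0) := by
    constructor
    · linarith
    · rw [faux_zero]; norm_num
  obtain ⟨c, hc, hfc⟩ := intermediate_value_Icc' (by norm_num : (0:ℝ) ≤ 2)
    (faux_cont.continuousOn) hmem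
  have hc0 : 0 < c := by
    rcases lt_or_eq_of_le hc.1 with h | h
    · exact h
    · exfalso; rw [← h] at hfc; rw [faux_zero] at hfc; norm_num at hfc
  refine ⟨Real.sqrt 2 * c, by positivity, ?_, ?_, ?_, ?_⟩
  · rw [M0_eq (by positivity)]
    have : Real.sqrt 2 * c / Real.sqrt 2 = c := by field_simp
    rw [this]; exact hfc
  · intro x hx hM
    rw [M0_eq hx.le] at hM
    have : x / Real.sqrt 2 = c := by
      apply faux_anti.injOn (Set.mem_Ici.mpr (by positivity)) (Set.mem_Ici.mpr hc0.le)
      rw [hM, hfc]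
    rw [div_eq_iff h2.ne'] at this
    rw [this, mul_comm]
  · intro x hx hxγ
    rw [M0_eq hx.le]
    have hlt : x / Real.sqrt 2 < c := by
      rw [div_lt_iff₀ h2]
      linarith [mul_comm c (Real.sqrt 2) ▸ hxγ]
    have := faux_anti (Set.mem_Ici.mpr (by positivity)) (Set.mem_Ici.mpr hc0.le) hlt
    rw [hfc] at this
    exact this
  · intro x hxγ
    have hx : 0 < x := lt_trans (by positivity) hxγ
    rw [M0_eq hx.le]
    have hlt : c < x / Real.sqrt 2 := by
      rw [lt_div_iff₀ h2]
      linarith [mul_comm c (Real.sqrt 2) ▸ hxγ]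
    have := faux_anti (Set.mem_Ici.mpr hc0.le)
      (Set.mem_Ici.mpr (by positivity)) hlt
    rw [hfc] at this
    exact this
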